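/- Let X be a δ-hyperbolic geodesic metric space, Y an α-quasi-convex subset, and x, x' ∈ X. Let y and y' be η- and η'-projections of x and x' on Y respectively. Then | Δ([x,x'],Y) − d(y,y') | ≤ ε, where ε can be taken to be 3α + 2η + 2η' + 6δ. -/

import Mathlib

open ENNReal

/-- The overlap quantity Δ(Y,Z), valued in ℝ≥0∞. -/
noncomputable def overlap {X : Type*} [MetricSpace X] (Y Z : Set X) : ℝ≥0∞ :=
  ⨆ y ∈ Y, ⨆ y' ∈ Y, ⨆ z ∈ Z, ⨆ z' ∈ Z,
    ENNReal.ofReal ((dist y y' + dist z z' - dist y z - dist y' z') / 2)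

/-- `γ` parametrizes a geodesic from `x` to `x'` (by arc length on
`[0, dist x x']`). -/
def IsGeodesicFrom {X : Type*} [MetricSpace X] (γ : ℝ → X) (x x' : X) : Prop :=
  γ 0 = x ∧ γ (dist x x') = x' ∧
    ∀ s ∈ Set.Icc (0 : ℝ) (dist x x'), ∀ t ∈ Set.Icc (0 : ℝ) (dist x x'),
      dist (γ s) (γ t) = |s - t|

/-- The overlap of a geodesic [x,x'] with an α-quasi-convex set Y is, up to
ε = 3α + 2η + 2η' + 6δ, the distance between projections of the endpoints. -/
theorem overlap_geodesic_quasiconvex_projections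
    {X : Type*} [MetricSpace X] (δ : ℝ) (hδ : 0 ≤ δ)
    (hyp : ∀ x y z t : X,
      (dist t x + dist t z - dist x z) / 2 ≥
        min ((dist t x + dist t y - dist x y) / 2)
            ((dist t y + dist t z - dist y z) / 2) - δ)
    (Y : Set X) (α : ℝ) (hα : 0 ≤ α)
    (hqc : ∀ x : X, ∀ u ∈ Y, ∀ u' ∈ Y,
      Metric.infDist x Y ≤ (dist x u + dist x u' - dist u u') / 2 + α)
    (x x' : X) (γ : ℝ → X) (hγ : IsGeodesicFrom γ x x')
    (y y' : X) (hy : y ∈ Y) (hy' : y' ∈ Y) (η η' : ℝ) (hη : 0 ≤ η) (hη' : 0 ≤ η')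
    (hproj : dist x y ≤ Metric.infDist x Y + η)
    (hproj' : dist x' y' ≤ Metric.infDist x' Y + η') :
    overlap (γ '' Set.Icc (0 : ℝ) (dist x x')) Y ≤
        ENNReal.ofReal (dist y y' + (3 * α + 2 * η + 2 * η' + 6 * δ)) ∧
      ENNReal.ofReal (dist y y') ≤
        overlap (γ '' Set.Icc (0 : ℝ) (dist x x')) Y +
          ENNReal.ofReal (3 * α + 2 * η + 2 * η' + 6 * δ) := by
  obtain ⟨hγ0, hγd, hγiso⟩ := hγ
  have hD0 : (0:ℝ) ≤ dist x x' := dist_nonneg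
  have hmemx : x ∈ γ '' Set.Icc (0:ℝ) (dist x x') := ⟨0, ⟨le_refl 0, hD0⟩, hγ0⟩
  have hmemx' : x' ∈ γ '' Set.Icc (0:ℝ) (dist x x') := ⟨dist x x', ⟨hD0, le_refl _⟩, hγd⟩
  -- projection lemmas: Gromov product of x and any z ∈ Y at y is at most α + η
  have L1 : ∀ z ∈ Y, dist x y + dist y z - dist x z ≤ 2*α + 2*η := by
    intro z hz
    have h := hqc x y hy z hz
    linarith
  have L1' : ∀ z ∈ Y, dist x' y' + dist y' z - dist x' z ≤ 2*α + 2*η' := by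
    intro z hz
    have h := hqc x' y' hy' z hz
    linarith
  constructor
  · -- upper bound for the overlap
    refine iSup₂_le fun p hp => iSup₂_le fun p' hp' => iSup₂_le fun z hz =>
      iSup₂_le fun z' hz' => ENNReal.ofReal_le_ofReal ?_
    obtain ⟨s, hs, rfl⟩ := hp
    obtain ⟨t, ht, rfl⟩ := hp'
    have hst := hγiso s hs t ht
    have hxs : dist x (γ s) = s := by
      have h := hγiso 0 ⟨le_refl 0, hD0⟩ s hs
      rw [hγ0] at h
      rw [h, abs_of_nonpos (by linarith [hs.1])]; ring
    have hxt : dist x (γ t) = t := by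
      have h := hγiso 0 ⟨le_refl 0, hD0⟩ t ht
      rw [hγ0] at h
      rw [h, abs_of_nonpos (by linarith [ht.1])]; ring
    have hsx' : dist (γ s) x' = dist x x' - s := by
      have h := hγiso s hs (dist x x') ⟨hD0, le_refl _⟩
      rw [hγd] at h
      rw [h, abs_of_nonpos (by linarith [hs.2])]; ring
    have htx' : dist (γ t) x' = dist x x' - t := by
      have h := hγiso t ht (dist x x') ⟨hD0, le_refl _⟩
      rw [hγd] at h
      rw [h, abs_of_nonpos (by linarith [ht.2])]; ring
    have hd4 : dist x x' ≤ dist x y + dist y y' + dist y' x' := dist_triangle4 x y y' x'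
    have cyx' : dist y' x' = dist x' y' := dist_comm y' x'
    rcases le_total s t with hcase | hcase
    · rw [hst, abs_of_nonpos (by linarith)]
      have t1 : dist x z ≤ dist x (γ s) + dist (γ s) z := dist_triangle x (γ s) z
      have t2 : dist x' z' ≤ dist x' (γ t) + dist (γ t) z' := dist_triangle x' (γ t) z'
      have c2 : dist x' (γ t) = dist (γ t) x' := dist_comm x' (γ t)
      have p1 := L1 z hz
      have p2 := L1' z' hz'
      have t3 : dist z z' ≤ dist z y + dist y y' + dist y' z' := dist_triangle4 z y y' z'
      have czy : dist z y = dist y z := dist_comm z y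
      linarith
    · rw [hst, abs_of_nonneg (by linarith)]
      have t1 : dist x' z ≤ dist x' (γ s) + dist (γ s) z := dist_triangle x' (γ s) z
      have c1 : dist x' (γ s) = dist (γ s) x' := dist_comm x' (γ s)
      have t2 : dist x z' ≤ dist x (γ t) + dist (γ t) z' := dist_triangle x (γ t) z'
      have p1 := L1' z hz
      have p2 := L1 z' hz'
      have t3 : dist z z' ≤ dist z y' + dist y' y + dist y z' := dist_triangle4 z y' y z'
      have czy : dist z y' = dist y' z := dist_comm z y'
      have cyy : dist y' y = dist y y' := dist_comm y' y
      linarith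
  · -- lower bound
    have key : ENNReal.ofReal ((dist x x' + dist y y' - dist x y - dist x' y') / 2) ≤
        overlap (γ '' Set.Icc (0:ℝ) (dist x x')) Y := by
      refine le_iSup₂_of_le x hmemx ?_
      refine le_iSup₂_of_le x' hmemx' ?_
      refine le_iSup₂_of_le y hy ?_
      exact le_iSup₂_of_le y' hy' le_rfl
    have h1 : dist x y + dist y y' - dist x y' ≤ 2*α + 2*η := L1 y' hy'
    have h2 : dist x' y' + dist y' y - dist x' y ≤ 2*α + 2*η' := L1' y hy
    have cxy : dist y x = dist x y := dist_comm y x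
    have cxy' : dist y x' = dist x' y := dist_comm y x'
    have cyy' : dist y y' = dist y' y := dist_comm y y'
    have cx'y' : dist y' x' = dist x' y' := dist_comm y' x'
    have cy'x : dist y' x = dist x y' := dist_comm y' x
    have mainA : dist x y + dist y y' + dist x' y' - dist x x' ≤
          2 * (3*α + 2*η + 2*η' + 6*δ) ∨
        dist y y' ≤ 3*α + 2*η + 2*η' + 6*δ := by
      have hA := hyp x x' y' y
      rcases le_total ((dist y x + dist y x' - dist x x')/2)
          ((dist y x' + dist y y' - dist x' y')/2) with hAB | hAB
      · -- case A : (x|x')_y ≤ α + η + δ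
        rw [min_eq_left hAB] at hA
        left; linarith
      · rw [min_eq_right hAB] at hA
        -- now (x'|y')_y ≤ α + η + δ
        have hB := hyp x' x y y'
        rcases le_total ((dist y' x' + dist y' x - dist x' x)/2)
            ((dist y' x + dist y' y - dist x y)/2) with hAB' | hAB'
        · -- case B : (x|x')_{y'} ≤ α + η' + δ
          rw [min_eq_left hAB'] at hB
          have cxx : dist x' x = dist x x' := dist_comm x' x
          left; linarith
        · -- case C : both (x'|y')_y and (x|y)_{y'} small
          rw [min_eq_right hAB'] at hB
          have hb1 : dist x y ≤ dist x y' + η :=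
            le_trans hproj (by linarith [Metric.infDist_le_dist_of_mem (x := x) hy'])
          have hb2 : dist x' y' ≤ dist x' y + η' :=
            le_trans hproj' (by linarith [Metric.infDist_le_dist_of_mem (x := x') hy])
          right; linarith
    rcases mainA with hT | hsmall
    · calc ENNReal.ofReal (dist y y')
          ≤ ENNReal.ofReal ((dist x x' + dist y y' - dist x y - dist x' y') / 2 +
              (3*α + 2*η + 2*η' + 6*δ)) := ENNReal.ofReal_le_ofReal (by linarith)
        _ ≤ ENNReal.ofReal ((dist x x' + dist y y' - dist x y - dist x' y') / 2) +
              ENNReal.ofReal (3*α + 2*η + 2*η' + 6*δ) := ENNReal.ofReal_add_le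
        _ ≤ overlap (γ '' Set.Icc (0:ℝ) (dist x x')) Y +
              ENNReal.ofReal (3*α + 2*η + 2*η' + 6*δ) := add_le_add_left key _
    · exact le_trans (ENNReal.ofReal_le_ofReal hsmall) (self_le_add_left _ _)
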